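/- For any fixed integer k ≥ 3, the sum V_k(x) := ∑_{n_1,…,n_k ≤ x} (n_1⋯n_k)/lcm(n_1,…,n_k) satisfies x^k ≪ V_k(x) ≪ x^k (log x)^{2^k−2} as x → ∞. -/

import Mathlib

set_option maxHeartbeats 1000000
open Finset

lemma decomp (k : ℕ) :
    ∀ (n : ℕ) (t : Fin k → ℕ), (∀ i, t i ≠ 0) → ∏ i, t i = n →
      ∃ d : Finset (Fin k) → ℕ, d ∅ = 1 ∧
        (∀ i, t i = ∏ S ∈ Finset.univ.filter (fun S => i ∈ S), d S) ∧
        (∏ S, d S) ∣ Finset.univ.lcm t := by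
  intro n
  induction n using Nat.strong_induction_on with
  | _ n IH =>
    intro t ht hn
    rcases eq_or_ne n 1 with rfl | hn1
    · -- all t i = 1
      have h1 : ∀ i, t i = 1 := by
        intro i
        have hd : t i ∣ 1 := hn ▸ Finset.dvd_prod_of_mem t (Finset.mem_univ i)
        exact Nat.dvd_one.1 hd
      refine ⟨fun _ => 1, rfl, fun i => ?_, ?_⟩
      · simp [h1 i]
      · simp
    · -- n ≠ 1; n ≠ 0
      have hn0 : n ≠ 0 := by
        rw [← hn]; exact Finset.prod_ne_zero_iff.2 fun i _ => ht i
      obtain ⟨p, hp, hpn⟩ := Nat.exists_prime_and_dvd hn1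
      obtain ⟨i₁, -, hpi⟩ := hp.prime.exists_mem_finset_dvd (by rw [hn]; exact hpn)
      set a : Fin k → ℕ := fun i => (t i).factorization p with ha
      set m : ℕ := Finset.univ.sup a with hm
      obtain ⟨i₀, -, hi₀⟩ := Finset.exists_mem_eq_sup Finset.univ ⟨i₁, Finset.mem_univ i₁⟩ a
      have ham : ∀ i, a i ≤ m := fun i => Finset.le_sup (Finset.mem_univ i)
      set t' : Fin k → ℕ := fun i => t i / p ^ a i with ht'
      have ht'0 : ∀ i, t' i ≠ 0 := fun i => (Nat.ordCompl_pos p (ht i)).ne'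
      have hfac : ∀ i, p ^ a i * t' i = t i := fun i => Nat.ordProj_mul_ordCompl_eq_self (t i) p
      have hnd : ∀ i, ¬ p ∣ t' i := fun i => Nat.not_dvd_ordCompl hp (ht i)
      -- product split
      have hsplit : ∏ i, t i = p ^ (∑ i, a i) * ∏ i, t' i := by
        rw [← Finset.prod_pow_eq_pow_sum, ← Finset.prod_mul_distrib]
        exact (Finset.prod_congr rfl fun i _ => (hfac i).symm)
      have hlt : ∏ i, t' i < n := by
        rw [← hn, hsplit]
        have h1 : 0 < ∏ i, t' i := Nat.pos_of_ne_zero (Finset.prod_ne_zero_iff.2 fun i _ => ht'0 i)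
        have hpos : 0 < a i₁ := by
          simpa [ha] using hp.factorization_pos_of_dvd (ht i₁) hpi
        have h2 : 1 < p ^ (∑ i, a i) := by
          apply Nat.one_lt_pow
          · exact (Finset.sum_pos' (fun i _ => Nat.zero_le _) ⟨i₁, Finset.mem_univ i₁, hpos⟩).ne'
          · exact hp.one_lt
        calc ∏ i, t' i = 1 * ∏ i, t' i := (one_mul _).symm
        _ < p ^ (∑ i, a i) * ∏ i, t' i := (Nat.mul_lt_mul_right h1).2 h2
      obtain ⟨d', hd'empty, hd'rep, hd'dvd⟩ := IH _ hlt t' ht'0 rfl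
      -- define e
      set e : Finset (Fin k) → ℕ := fun S =>
        ((Finset.Icc 1 m).filter fun j => (Finset.univ.filter fun i => j ≤ a i) = S).card with he
      have key : ∀ (T : Finset (Finset (Fin k))),
          ∑ S ∈ T, e S = ((Finset.Icc 1 m).filter
            (fun j => (Finset.univ.filter fun i => j ≤ a i) ∈ T)).card := by
        intro T
        rw [Finset.card_eq_sum_card_fiberwise (f := fun j => Finset.univ.filter fun i => j ≤ a i)
          (s := (Finset.Icc 1 m).filter fun j => (Finset.univ.filter fun i => j ≤ a i) ∈ T)
          (t := T) (fun x hx => (Finset.mem_filter.1 hx).2)]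
        apply Finset.sum_congr rfl
        intro S hS
        simp only [he]
        congr 1
        ext j
        simp only [Finset.mem_filter, Finset.mem_Icc]
        constructor
        · rintro ⟨h1, h2⟩; exact ⟨⟨h1, h2 ▸ hS⟩, h2⟩
        · rintro ⟨⟨h1, _⟩, h3⟩; exact ⟨h1, h3⟩
      have keyuniv : ∑ S, e S = m := by
        rw [key]
        rw [Finset.filter_true_of_mem (fun j hj => Finset.mem_univ _)]
        simp
      have keyi : ∀ i, ∑ S ∈ Finset.univ.filter (fun S => i ∈ S), e S = a i := by
        intro i
        rw [key]
        have : ((Finset.Icc 1 m).filter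
            (fun j => (Finset.univ.filter fun i' => j ≤ a i') ∈ Finset.univ.filter (fun S => i ∈ S)))
            = Finset.Icc 1 (a i) := by
          ext j
          simp only [Finset.mem_filter, Finset.mem_Icc, Finset.mem_univ, true_and]
          constructor
          · rintro ⟨⟨h1, h2⟩, h3⟩; exact ⟨h1, h3⟩
          · intro ⟨h1, h2⟩; exact ⟨⟨h1, h2.trans (ham i)⟩, h2⟩
        rw [this, Nat.card_Icc]; omega
      have keyempty : e ∅ = 0 := by
        rw [he]
        simp only [Finset.card_eq_zero]
        rw [Finset.filter_eq_empty_iff]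
        intro j hj
        intro hcon
        have : i₀ ∈ (Finset.univ.filter fun i => j ≤ a i) := by
          simp only [Finset.mem_filter, Finset.mem_univ, true_and]
          rw [← hi₀]; exact (Finset.mem_Icc.1 hj).2
        rw [hcon] at this
        exact absurd this (Finset.notMem_empty _)
      refine ⟨fun S => d' S * p ^ e S, by simp [hd'empty, keyempty], fun i => ?_, ?_⟩
      · rw [Finset.prod_mul_distrib, Finset.prod_pow_eq_pow_sum, keyi i, ← hd'rep i, mul_comm]
        exact (hfac i).symm
      · rw [Finset.prod_mul_distrib, Finset.prod_pow_eq_pow_sum, keyuniv]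
        have h2 : Finset.univ.lcm t' ∣ Finset.univ.lcm t :=
          Finset.lcm_dvd fun i _ => dvd_trans (Nat.ordCompl_dvd (t i) p) (Finset.dvd_lcm (Finset.mem_univ i))
        have h3 : p ^ m ∣ Finset.univ.lcm t := by
          refine dvd_trans ?_ (Finset.dvd_lcm (Finset.mem_univ i₀))
          rw [hm, hi₀]; exact Nat.ordProj_dvd (t i₀) p
        have hcop : Nat.Coprime (∏ S, d' S) (p ^ m) := by
          have hd : (∏ S, d' S) ∣ ∏ i, t' i :=
            hd'dvd.trans (Finset.lcm_dvd fun i _ => Finset.dvd_prod_of_mem t' (Finset.mem_univ i))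
          have hcp : Nat.Coprime p (∏ i, t' i) :=
            Nat.Coprime.prod_right fun i _ => (hp.coprime_iff_not_dvd).2 (hnd i)
          exact ((hcp.coprime_dvd_right hd).symm).pow_right m
        exact hcop.mul_dvd_of_dvd_of_dvd (hd'dvd.trans h2) h3

lemma decomp' (k : ℕ) (t : Fin k → ℕ) (ht : ∀ i, t i ≠ 0) :
    ∃ d : Finset (Fin k) → ℕ, d ∅ = 1 ∧
      (∀ i, t i = ∏ S ∈ Finset.univ.filter (fun S => i ∈ S), d S) ∧
      (∏ S, d S) ∣ Finset.univ.lcm t :=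
  decomp k (∏ i, t i) t ht rfl

lemma upper (k N : ℕ) :
    ∑ t ∈ Fintype.piFinset fun _ : Fin k => Finset.Icc 1 N,
        (∏ i, (t i : ℝ)) / (Finset.univ.lcm t : ℕ) ≤
      (N : ℝ) ^ k * (∑ j ∈ Finset.Icc 1 N, (j : ℝ)⁻¹) ^
        ((Finset.univ.filter fun S : Finset (Fin k) => 2 ≤ S.card).card) := by
  classical
  set A := Fintype.piFinset fun _ : Fin k => Finset.Icc 1 N with hA
  set box : Finset (Fin k) → Finset ℕ := fun S => if 2 ≤ S.card then Finset.Icc 1 N else {1}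
    with hbox
  set u := Fintype.piFinset box with hu
  set F : (Finset (Fin k) → ℕ) → ℝ := fun r => ∏ S, (r S : ℝ) ^ (S.card - 1) with hF
  set Q : Fin k → (Finset (Fin k) → ℕ) → ℕ :=
    fun i r => ∏ S ∈ Finset.univ.filter (fun S => i ∈ S), r S with hQ
  have hFnonneg : ∀ r, 0 ≤ F r := fun r =>
    Finset.prod_nonneg fun S _ => pow_nonneg (Nat.cast_nonneg _) _
  -- choice of decomposition
  have hdex : ∀ t : Fin k → ℕ, t ∈ A → ∀ i, t i ≠ 0 := by
    intro t ht i
    have := (Fintype.mem_piFinset.1 ht) i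
    have := (Finset.mem_Icc.1 this).1
    omega
  set dfun : (Fin k → ℕ) → (Finset (Fin k) → ℕ) := fun t =>
    if h : ∀ i, t i ≠ 0 then Classical.choose (decomp' k t h) else fun _ => 1 with hdfun
  have hdspec : ∀ t : Fin k → ℕ, (∀ i, t i ≠ 0) →
      (dfun t) ∅ = 1 ∧ (∀ i, t i = ∏ S ∈ Finset.univ.filter (fun S => i ∈ S), dfun t S) ∧
        (∏ S, dfun t S) ∣ Finset.univ.lcm t := by
    intro t h
    rw [hdfun]
    simp only [dif_pos h]
    exact Classical.choose_spec (decomp' k t h)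
  set r : (Fin k → ℕ) → (Finset (Fin k) → ℕ) :=
    fun t S => if 2 ≤ S.card then dfun t S else 1 with hr
  -- positivity of d values
  have hddvd : ∀ t : Fin k → ℕ, (∀ i, t i ≠ 0) → ∀ S : Finset (Fin k), ∀ i ∈ S, dfun t S ∣ t i := by
    intro t h S i hiS
    have hd := Finset.dvd_prod_of_mem (dfun t)
      (show S ∈ Finset.univ.filter (fun S' => i ∈ S') from by simp [hiS])
    rw [← (hdspec t h).2.1 i] at hd
    exact hd
  have hdpos : ∀ t : Fin k → ℕ, (∀ i, t i ≠ 0) → ∀ S, 1 ≤ dfun t S := by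
    intro t h S
    rcases S.eq_empty_or_nonempty with rfl | ⟨i, hiS⟩
    · rw [(hdspec t h).1]
    · exact Nat.pos_of_ne_zero fun h0 => h i (Nat.eq_zero_of_zero_dvd (h0 ▸ hddvd t h S i hiS))
  -- swap lemma
  have swap_prod : ∀ c : Finset (Fin k) → ℝ,
      ∏ i : Fin k, ∏ S ∈ Finset.univ.filter (fun S => i ∈ S), c S
        = ∏ S : Finset (Fin k), c S ^ S.card := by
    intro c
    calc ∏ i : Fin k, ∏ S ∈ Finset.univ.filter (fun S => i ∈ S), c S
        = ∏ i : Fin k, ∏ S : Finset (Fin k), (if i ∈ S then c S else 1) := by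
          exact Finset.prod_congr rfl fun i _ => Finset.prod_filter _ _
      _ = ∏ S : Finset (Fin k), ∏ i : Fin k, (if i ∈ S then c S else 1) := Finset.prod_comm
      _ = ∏ S : Finset (Fin k), c S ^ S.card := by
          refine Finset.prod_congr rfl fun S _ => ?_
          rw [← Finset.prod_filter]
          rw [Finset.prod_const]
          congr 1
          rw [show (Finset.univ.filter fun i => i ∈ S) = S from by ext i; simp]
  -- pointwise bound
  have hpoint : ∀ t ∈ A, (∏ i, (t i : ℝ)) / (Finset.univ.lcm t : ℕ) ≤ F (r t) := by
    intro t htA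
    have h := hdex t htA
    obtain ⟨hde, hrep, hdvd⟩ := hdspec t h
    have hL0 : (Finset.univ.lcm t : ℕ) ≠ 0 := by
      rw [Ne, Finset.lcm_eq_zero_iff]
      rintro ⟨i, -, hi0⟩
      exact h i hi0
    have hD0 : 0 < ∏ S, dfun t S := Finset.prod_pos fun S _ => hdpos t h S
    have hDL : (∏ S, dfun t S) ≤ Finset.univ.lcm t := Nat.le_of_dvd (Nat.pos_of_ne_zero hL0) hdvd
    have hcast : (∏ i, (t i : ℝ)) = ∏ S, (dfun t S : ℝ) ^ S.card := by
      rw [← swap_prod]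
      refine Finset.prod_congr rfl fun i _ => ?_
      rw [hrep i]
      push_cast
      rfl
    have hstep : (∏ i, (t i : ℝ)) / (Finset.univ.lcm t : ℕ) ≤
        (∏ i, (t i : ℝ)) / (∏ S, (dfun t S : ℝ)) := by
      have hnum : 0 ≤ ∏ i, (t i : ℝ) := Finset.prod_nonneg fun i _ => Nat.cast_nonneg _
      have h1 : (0:ℝ) < ∏ S, (dfun t S : ℝ) := by
        rw [← Nat.cast_prod]; exact_mod_cast hD0
      apply div_le_div_of_nonneg_left hnum h1
      exact_mod_cast hDL
    refine hstep.trans_eq ?_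
    rw [hcast, ← Nat.cast_prod]
    push_cast
    rw [← Finset.prod_div_distrib]
    refine Finset.prod_congr rfl fun S _ => ?_
    have hv : (dfun t S : ℝ) ≠ 0 := Nat.cast_ne_zero.2 (Nat.one_le_iff_ne_zero.1 (hdpos t h S))
    by_cases h2 : 2 ≤ S.card
    · simp only [hr, if_pos h2]
      rw [pow_sub₀ _ hv (by omega : 1 ≤ S.card), pow_one, div_eq_mul_inv]
    · have hc : S.card = 0 ∨ S.card = 1 := by omega
      rcases hc with h0 | h1
      · have hSe : S = ∅ := Finset.card_eq_zero.1 h0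
        subst hSe
        rw [hde]
        simp [hr, h0]
      · simp only [hr, if_neg h2, h1, pow_one]
        rw [div_self hv]
        norm_num
  -- the injection target
  set P := ((A ×ˢ u).filter fun p : (Fin k → ℕ) × (Finset (Fin k) → ℕ) =>
    ∀ i, Q i p.2 ∣ p.1 i) with hP
  set Φ : (Fin k → ℕ) → (Fin k → ℕ) × (Finset (Fin k) → ℕ) := fun t => (t, r t) with hΦ
  have himg : ∀ t ∈ A, Φ t ∈ P := by
    intro t htA
    have h := hdex t htA
    obtain ⟨hde, hrep, hdvd⟩ := hdspec t h
    refine Finset.mem_filter.2 ⟨Finset.mem_product.2 ⟨htA, ?_⟩, ?_⟩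
    · refine Fintype.mem_piFinset.2 fun S => ?_
      by_cases h2 : 2 ≤ S.card
      · simp only [hΦ, hr, hbox, if_pos h2, Finset.mem_Icc]
        obtain ⟨i, hiS⟩ := Finset.card_pos.1 (by omega : 0 < S.card)
        refine ⟨hdpos t h S, ?_⟩
        have h1 : dfun t S ≤ t i := Nat.le_of_dvd (Nat.pos_of_ne_zero (h i)) (hddvd t h S i hiS)
        have h2' : t i ≤ N := (Finset.mem_Icc.1 ((Fintype.mem_piFinset.1 htA) i)).2
        omega
      · simp [hΦ, hr, hbox, h2]
    · intro i
      show Q i (r t) ∣ t i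
      have hdd : Q i (r t) ∣ ∏ S ∈ Finset.univ.filter (fun S => i ∈ S), dfun t S := by
        refine Finset.prod_dvd_prod_of_dvd _ _ fun S hS => ?_
        by_cases h2 : 2 ≤ S.card
        · simp [hr, h2]
        · simp [hr, h2]
      rw [hrep i]
      exact hdd
  have himgsub : A.image Φ ⊆ P := Finset.image_subset_iff.2 himg
  -- counting multiples
  have hcount : ∀ r' ∈ u, ((A.filter fun t => ∀ i, Q i r' ∣ t i)).card = ∏ i, N / Q i r' := by
    intro r' hr'
    have hEq : A.filter (fun t => ∀ i, Q i r' ∣ t i)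
        = Fintype.piFinset (fun i => (Finset.Icc 1 N).filter (fun j => Q i r' ∣ j)) := by
      ext t
      simp only [Finset.mem_filter, Fintype.mem_piFinset, hA]
      constructor
      · rintro ⟨h1, h2⟩ i; exact ⟨h1 i, h2 i⟩
      · intro h'; exact ⟨fun i => (h' i).1, fun i => (h' i).2⟩
    rw [hEq, Fintype.card_piFinset]
    refine Finset.prod_congr rfl fun i _ => ?_
    rw [show Finset.Icc 1 N = Finset.Ioc 0 N from Finset.Icc_add_one_left_eq_Ioc 0 N,
      Nat.Ioc_filter_dvd_card_eq_div]
  -- chain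
  have chain1 : ∑ t ∈ A, (∏ i, (t i : ℝ)) / (Finset.univ.lcm t : ℕ) ≤ ∑ p ∈ P, F p.2 := by
    calc ∑ t ∈ A, (∏ i, (t i : ℝ)) / (Finset.univ.lcm t : ℕ)
        ≤ ∑ t ∈ A, F (r t) := Finset.sum_le_sum hpoint
      _ = ∑ p ∈ A.image Φ, F p.2 := by
          rw [Finset.sum_image (fun x _ y _ hxy => congrArg Prod.fst hxy)]
      _ ≤ ∑ p ∈ P, F p.2 :=
          Finset.sum_le_sum_of_subset_of_nonneg himgsub (fun p _ _ => hFnonneg _)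
  have chain2 : ∑ p ∈ P, F p.2
      = ∑ r' ∈ u, ((∏ i, N / Q i r' : ℕ) : ℝ) * F r' := by
    rw [hP, Finset.sum_filter, Finset.sum_product, Finset.sum_comm]
    dsimp only
    refine Finset.sum_congr rfl fun r' hr' => ?_
    rw [← Finset.sum_filter, Finset.sum_const, nsmul_eq_mul, hcount r' hr']
  -- per-r' bound
  have chain3 : ∀ r' ∈ u, ((∏ i, N / Q i r' : ℕ) : ℝ) * F r'
      ≤ (N : ℝ) ^ k * ∏ S, (r' S : ℝ)⁻¹ := by
    intro r' hr'
    have hrS : ∀ S, 1 ≤ r' S := by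
      intro S
      have := (Fintype.mem_piFinset.1 hr') S
      by_cases h2 : 2 ≤ S.card
      · simp only [hbox, if_pos h2, Finset.mem_Icc] at this; exact this.1
      · simp only [hbox, if_neg h2, Finset.mem_singleton] at this; omega
    have hrS0 : ∀ S, (r' S : ℝ) ≠ 0 := fun S => Nat.cast_ne_zero.2 (Nat.one_le_iff_ne_zero.1 (hrS S))
    have hQpos : ∀ i, 0 < Q i r' := fun i => Finset.prod_pos fun S _ => hrS S
    have hstep1 : ((∏ i, N / Q i r' : ℕ) : ℝ) ≤ ∏ i : Fin k, (N : ℝ) / (Q i r' : ℝ) := by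
      push_cast
      refine Finset.prod_le_prod (fun i _ => Nat.cast_nonneg _) fun i _ => Nat.cast_div_le
    have hstep3 : ∏ i : Fin k, (Q i r' : ℝ) = ∏ S, (r' S : ℝ) ^ S.card := by
      rw [← swap_prod]
      refine Finset.prod_congr rfl fun i _ => ?_
      rw [hQ]
      push_cast
      rfl
    have hstep4 : F r' = (∏ S, (r' S : ℝ) ^ S.card) * ∏ S, (r' S : ℝ)⁻¹ := by
      rw [← Finset.prod_mul_distrib]
      refine Finset.prod_congr rfl fun S _ => ?_
      by_cases h2 : 1 ≤ S.card
      · rw [pow_sub₀ _ (hrS0 S) h2, pow_one]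
      · have h0 : S.card = 0 := by omega
        have hS1 : r' S = 1 := by
          have := (Fintype.mem_piFinset.1 hr') S
          simp only [hbox, if_neg (by omega : ¬ 2 ≤ S.card), Finset.mem_singleton] at this
          exact this
        simp [h0, hS1]
    calc ((∏ i, N / Q i r' : ℕ) : ℝ) * F r'
        ≤ (∏ i : Fin k, (N : ℝ) / (Q i r' : ℝ)) * F r' := by
          exact mul_le_mul_of_nonneg_right hstep1 (hFnonneg _)
      _ = (N : ℝ) ^ k * ∏ S, (r' S : ℝ)⁻¹ := by
          rw [Finset.prod_div_distrib, Finset.prod_const, Finset.card_univ, Fintype.card_fin,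
            hstep3, hstep4]
          have hprodpos : (0:ℝ) < ∏ S, (r' S : ℝ) ^ S.card :=
            Finset.prod_pos fun S _ => pow_pos (by exact_mod_cast hrS S) _
          field_simp
  -- final sum computation
  have chain4 : ∑ r' ∈ u, ((N : ℝ) ^ k * ∏ S, (r' S : ℝ)⁻¹)
      = (N : ℝ) ^ k * (∑ j ∈ Finset.Icc 1 N, (j : ℝ)⁻¹) ^
        ((Finset.univ.filter fun S : Finset (Fin k) => 2 ≤ S.card).card) := by
    rw [← Finset.mul_sum]
    congr 1
    rw [hu]
    calc ∑ x ∈ Fintype.piFinset box, ∏ S : Finset (Fin k), ((x S : ℝ))⁻¹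
        = ∏ S : Finset (Fin k), ∑ j ∈ box S, (j : ℝ)⁻¹ := (Finset.prod_univ_sum (κ := fun _ => ℕ) box (fun _ j => (j : ℝ)⁻¹)).symm
      _ = ∏ S : Finset (Fin k),
            (if 2 ≤ S.card then (∑ j ∈ Finset.Icc 1 N, (j : ℝ)⁻¹) else 1) := by
          refine Finset.prod_congr rfl fun S _ => ?_
          by_cases h2 : 2 ≤ S.card
          · simp [hbox, h2]
          · simp [hbox, h2]
      _ = _ := by
          rw [← Finset.prod_filter, Finset.prod_const]
  calc ∑ t ∈ A, (∏ i, (t i : ℝ)) / (Finset.univ.lcm t : ℕ)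
      ≤ ∑ p ∈ P, F p.2 := chain1
    _ = ∑ r' ∈ u, ((∏ i, N / Q i r' : ℕ) : ℝ) * F r' := chain2
    _ ≤ ∑ r' ∈ u, ((N : ℝ) ^ k * ∏ S, (r' S : ℝ)⁻¹) := Finset.sum_le_sum chain3
    _ = _ := chain4

open Filter in
theorem V_k_order_of_magnitude (k : ℕ) (hk : 3 ≤ k) :
    ∃ c C : ℝ, 0 < c ∧ 0 < C ∧
      ∀ᶠ x : ℝ in atTop,
        c * x ^ k ≤
          (∑ t ∈ Fintype.piFinset fun _ : Fin k => Finset.Icc 1 ⌊x⌋₊,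
            (∏ i, (t i : ℝ)) / (Finset.univ.lcm t : ℕ)) ∧
        (∑ t ∈ Fintype.piFinset fun _ : Fin k => Finset.Icc 1 ⌊x⌋₊,
            (∏ i, (t i : ℝ)) / (Finset.univ.lcm t : ℕ)) ≤
          C * x ^ k * (Real.log x) ^ (2 ^ k - 2) := by
  classical
  refine ⟨(1/4 : ℝ) ^ k, (2:ℝ) ^ (2^k), by positivity, by positivity, ?_⟩
  filter_upwards [eventually_ge_atTop (4:ℝ)] with x hx
  set N := ⌊x⌋₊ with hN
  have hx0 : (0:ℝ) ≤ x := by linarith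
  have hN4 : 4 ≤ N := Nat.le_floor (by exact_mod_cast hx)
  have hxN1 : x ≤ (N:ℝ) + 1 := (Nat.lt_floor_add_one x).le
  have hNx : (N:ℝ) ≤ x := Nat.floor_le hx0
  have hk1 : 1 ≤ k := by omega
  constructor
  · -- lower bound
    have himg : ∀ n ∈ Finset.Icc 1 N, (fun _ : Fin k => n) ∈
        Fintype.piFinset fun _ : Fin k => Finset.Icc 1 N :=
      fun n hn => Fintype.mem_piFinset.2 fun _ => hn
    have h1 : ∑ t ∈ (Finset.Icc 1 N).image (fun n (_ : Fin k) => n),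
          (∏ i, (t i : ℝ)) / (Finset.univ.lcm t : ℕ)
        ≤ ∑ t ∈ Fintype.piFinset fun _ : Fin k => Finset.Icc 1 N,
          (∏ i, (t i : ℝ)) / (Finset.univ.lcm t : ℕ) := by
      refine Finset.sum_le_sum_of_subset_of_nonneg (Finset.image_subset_iff.2 himg) ?_
      intro t _ _
      exact div_nonneg (Finset.prod_nonneg fun i _ => Nat.cast_nonneg _) (Nat.cast_nonneg _)
    have h2 : ∑ t ∈ (Finset.Icc 1 N).image (fun n (_ : Fin k) => n),
          (∏ i, (t i : ℝ)) / (Finset.univ.lcm t : ℕ)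
        = ∑ n ∈ Finset.Icc 1 N, (n : ℝ) ^ (k - 1) := by
      rw [Finset.sum_image (fun a _ b _ h => congrFun h (⟨0, by omega⟩ : Fin k))]
      refine Finset.sum_congr rfl fun n hn => ?_
      have hn1 : 1 ≤ n := (Finset.mem_Icc.1 hn).1
      have hlcm : Finset.univ.lcm (fun _ : Fin k => n) = n :=
        Nat.dvd_antisymm (Finset.lcm_dvd fun i _ => dvd_rfl)
          (Finset.dvd_lcm (Finset.mem_univ (⟨0, by omega⟩ : Fin k)))
      rw [hlcm, Finset.prod_const, Finset.card_univ, Fintype.card_fin]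
      have hne : (n:ℝ) ≠ 0 := Nat.cast_ne_zero.2 (by omega)
      have hh : (n:ℝ) ^ k = (n:ℝ) ^ (k-1) * n := by
        rw [← pow_succ]
        congr 1
        omega
      rw [hh, mul_div_assoc, div_self hne, mul_one]
    -- estimate the diagonal sum
    have hss : Finset.Icc (N/2+1) N ⊆ Finset.Icc 1 N := Finset.Icc_subset_Icc (by omega) le_rfl
    have h4 : ∑ n ∈ Finset.Icc (N/2+1) N, (n:ℝ)^(k-1) ≤ ∑ n ∈ Finset.Icc 1 N, (n:ℝ)^(k-1) :=
      Finset.sum_le_sum_of_subset_of_nonneg hss fun n _ _ => by positivity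
    have h5 : ((Finset.Icc (N/2+1) N).card) • (((N/2+1 : ℕ)):ℝ)^(k-1)
        ≤ ∑ n ∈ Finset.Icc (N/2+1) N, (n:ℝ)^(k-1) := by
      refine Finset.card_nsmul_le_sum _ _ _ fun n hn => ?_
      refine pow_le_pow_left₀ (Nat.cast_nonneg _) ?_ _
      exact_mod_cast (Finset.mem_Icc.1 hn).1
    rw [Nat.card_Icc] at h5
    have hcard : N + 1 - (N/2+1) = N - N/2 := by omega
    rw [hcard, nsmul_eq_mul] at h5
    have ha : x/4 ≤ ((N - N/2 : ℕ) : ℝ) := by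
      have h6 : N + 1 ≤ 4 * (N - N/2) := by omega
      have h7 : ((N + 1 : ℕ) : ℝ) ≤ ((4 * (N - N/2) : ℕ) : ℝ) := Nat.cast_le.2 h6
      push_cast at h7
      have h8 : ((N:ℝ))+1 ≤ 4 * ((N - N/2 : ℕ) : ℝ) := by
        calc ((N:ℝ))+1 = ((N + 1 : ℕ) : ℝ) := by push_cast; ring
        _ ≤ ((4 * (N - N/2) : ℕ) : ℝ) := Nat.cast_le.2 h6
        _ = 4 * ((N - N/2 : ℕ) : ℝ) := by push_cast; ring
      linarith
    have hb : x/4 ≤ ((N/2 + 1 : ℕ) : ℝ) := by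
      have h6 : N + 1 ≤ 4 * (N/2 + 1) := by omega
      have h8 : ((N:ℝ))+1 ≤ 4 * ((N/2 + 1 : ℕ) : ℝ) := by
        calc ((N:ℝ))+1 = ((N + 1 : ℕ) : ℝ) := by push_cast; ring
        _ ≤ ((4 * (N/2 + 1) : ℕ) : ℝ) := Nat.cast_le.2 h6
        _ = 4 * ((N/2 + 1 : ℕ) : ℝ) := by push_cast; ring
      linarith
    have h9 : (x/4) * (x/4)^(k-1) ≤ ((N - N/2 : ℕ) : ℝ) * (((N/2+1 : ℕ)):ℝ)^(k-1) := by
      refine mul_le_mul ha ?_ (by positivity) (Nat.cast_nonneg _)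
      exact pow_le_pow_left₀ (by positivity) hb _
    have h10 : (1/4 : ℝ) ^ k * x ^ k = (x/4) * (x/4)^(k-1) := by
      have e1 : (x/4) * (x/4)^(k-1) = (x/4)^k := by
        rw [← pow_succ']
        congr 1
        omega
      rw [e1]
      rw [show (x/4 : ℝ) = (1/4) * x by ring, mul_pow]
    rw [h10]
    exact le_trans (le_trans h9 h5) (le_trans h4 (h2 ▸ h1))
  · -- upper bound
    refine (upper k N).trans ?_
    set H := ∑ j ∈ Finset.Icc 1 N, (j:ℝ)⁻¹ with hH
    set m := (Finset.univ.filter fun S : Finset (Fin k) => 2 ≤ S.card).card with hm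
    have hH1 : 1 ≤ H := by
      have h1 : (1:ℕ) ∈ Finset.Icc 1 N := Finset.mem_Icc.2 ⟨le_rfl, by omega⟩
      have := Finset.single_le_sum (f := fun j : ℕ => (j:ℝ)⁻¹) (fun j _ => by positivity) h1
      simpa using this
    have hlogx : 1 ≤ Real.log x := by
      have he : Real.exp 1 ≤ x :=
        le_trans (le_of_lt (lt_trans Real.exp_one_lt_d9 (by norm_num))) hx
      exact (Real.le_log_iff_exp_le (by linarith)).2 he
    have hHlog : H ≤ 2 * Real.log x := by
      have h1 : (harmonic N : ℝ) = H := by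
        rw [harmonic_eq_sum_Icc]
        push_cast
        rfl
      have h2 := harmonic_le_one_add_log N
      have h3 : Real.log N ≤ Real.log x := by
        apply Real.log_le_log (by exact_mod_cast Nat.pos_of_ne_zero (by omega)) hNx
      linarith [h1 ▸ h2]
    have hmle : m ≤ 2^k - 2 := by
      have hi0 : 0 < k := by omega
      set T := (Finset.univ.filter fun S : Finset (Fin k) => 2 ≤ S.card) with hT
      have hne : (∅ : Finset (Fin k)) ≠ ({(⟨0, hi0⟩ : Fin k)} : Finset (Fin k)) :=
        Ne.symm (Finset.singleton_ne_empty _)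
      have hemp : (∅ : Finset (Fin k)) ∉ T := by simp [hT]
      have hs : ({(⟨0, hi0⟩ : Fin k)} : Finset (Fin k)) ∉ T := by simp [hT]
      have hcard2 : (insert (∅ : Finset (Fin k))
          (insert ({(⟨0, hi0⟩ : Fin k)} : Finset (Fin k)) T)).card = T.card + 2 := by
        rw [Finset.card_insert_of_notMem (by
            simp only [Finset.mem_insert]
            push_neg
            exact ⟨hne, hemp⟩),
          Finset.card_insert_of_notMem hs]
      have hle : (insert (∅ : Finset (Fin k))
          (insert ({(⟨0, hi0⟩ : Fin k)} : Finset (Fin k)) T)).card ≤ 2^k := by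
        refine le_trans (Finset.card_le_card (Finset.subset_univ _)) ?_
        rw [Finset.card_univ, Fintype.card_finset, Fintype.card_fin]
      have hm2 : m = T.card := by rw [hm]
      omega
    have hstep : H ^ m ≤ (2 * Real.log x) ^ (2^k - 2) := by
      calc H ^ m ≤ H ^ (2^k - 2) := pow_le_pow_right₀ hH1 hmle
        _ ≤ (2 * Real.log x) ^ (2^k - 2) := pow_le_pow_left₀ (by linarith) hHlog _
    calc (N:ℝ)^k * H ^ m ≤ x^k * ((2 * Real.log x) ^ (2^k - 2)) := by
          refine mul_le_mul (pow_le_pow_left₀ (Nat.cast_nonneg _) hNx _) hstep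
            (by positivity) (by positivity)
      _ = (2:ℝ)^(2^k - 2) * x^k * (Real.log x) ^ (2^k-2) := by
          rw [mul_pow]
          ring
      _ ≤ (2:ℝ)^(2^k) * x^k * (Real.log x) ^ (2^k-2) := by
          have hp : (2:ℝ)^(2^k - 2) ≤ (2:ℝ)^(2^k) :=
            pow_le_pow_right₀ one_le_two (Nat.sub_le _ _)
          have hnn : (0:ℝ) ≤ x ^ k * (Real.log x) ^ (2^k-2) := by positivity
          calc (2:ℝ)^(2^k - 2) * x^k * (Real.log x) ^ (2^k-2)
              = (2:ℝ)^(2^k - 2) * (x^k * (Real.log x) ^ (2^k-2)) := by ring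
            _ ≤ (2:ℝ)^(2^k) * (x^k * (Real.log x) ^ (2^k-2)) :=
              mul_le_mul_of_nonneg_right hp hnn
            _ = (2:ℝ)^(2^k) * x^k * (Real.log x) ^ (2^k-2) := by ring
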